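/- Let k ≥ 1 be an integer and γ ≥ 1 a real number. Let a₁ ≥ a₂ ≥ … ≥ a_k ≥ 0 and p₁, …, p_k be real numbers, and let q_{i,j} ≥ 0 be real numbers for 1 ≤ i ≤ k, 1 ≤ j ≤ k. Suppose that (i) p_j ≥ Σ_{i=1}^{k} q_{i,j} for every 1 ≤ j ≤ k, and (ii) p_j ≥ (1/(3γ))·(a_i − Σ_{j'=1}^{j−1} q_{i,j'}) for every 1 ≤ j ≤ k and every 1 ≤ i ≤ k. Let P : ℕ → ℝ satisfy P(1) = 1/(3γ) and, for every integer m ≥ 2, P(m) = ((3γm² − (3γ+1)m + 1)/(3γm²))·P(m−1) + 1/(3γm). Then Σ_{j=1}^{k} p_j ≥ P(k)·Σ_{i=1}^{k} a_i. -/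

import Mathlib

open Finset

/-- Jensen's inequality specialization: if `(n+1)A = 1 + nB` with `B ≥ 0`,
then `(n+1)A^n ≤ 1 + nB^n`. -/
lemma key_jensen (n : ℕ) (hn : 1 ≤ n) (A B : ℝ) (hB : 0 ≤ B)
    (hAB : ((n : ℝ) + 1) * A = 1 + n * B) :
    ((n : ℝ) + 1) * A ^ n ≤ 1 + n * B ^ n := by
  obtain ⟨m, rfl⟩ : ∃ m, n = m + 1 := ⟨n - 1, (Nat.succ_pred_eq_of_pos hn).symm⟩
  have hsum1 : ∑ i ∈ Finset.range (m + 2), (if i = 0 then (1 : ℝ) else B)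
      = 1 + ((m : ℝ) + 1) * B := by
    rw [Finset.sum_range_succ']
    simp [Finset.sum_const]
    push_cast
    ring
  have hsum2 : ∑ i ∈ Finset.range (m + 2), (if i = 0 then (1 : ℝ) else B) ^ (m + 1)
      = 1 + ((m : ℝ) + 1) * B ^ (m + 1) := by
    rw [Finset.sum_range_succ']
    simp [Finset.sum_const, apply_ite (· ^ (m + 1))]
    push_cast
    ring
  have h := pow_sum_div_card_le_sum_pow (s := Finset.range (m + 2))
    (f := fun i => if i = 0 then (1 : ℝ) else B)
    (fun i _ => by by_cases h : i = 0 <;> simp [h, hB]) m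
  rw [hsum1, hsum2, Finset.card_range] at h
  have hne : ((m : ℝ) + 2) ^ m ≠ 0 := by positivity
  push_cast at h hAB ⊢
  have hrw : (1 + ((m : ℝ) + 1) * B) ^ (m + 1) = ((m : ℝ) + 2) ^ m * (((m : ℝ) + 1 + 1) * A ^ (m + 1)) := by
    have : (1 + ((m : ℝ) + 1) * B) = ((m : ℝ) + 2) * A := by linarith [hAB]
    rw [this, mul_pow, pow_succ]
    ring
  rw [hrw, mul_div_cancel_left₀ _ hne] at h
  linarith [h]

/-- The recurrence `P` is bounded by `1 - (1 - β/m)^m`. -/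
lemma Pbound (β : ℝ) (hβ0 : 0 ≤ β) (hβ1 : β ≤ 1) (P : ℕ → ℝ)
    (hP1 : P 1 = β)
    (hPm : ∀ m : ℕ, 2 ≤ m →
      P m = (((m : ℝ) - 1) * ((m : ℝ) - β) / (m : ℝ) ^ 2) * P (m - 1) + β / m) :
    ∀ m : ℕ, 1 ≤ m → P m ≤ 1 - (1 - β / (m : ℝ)) ^ m := by
  intro m hm
  induction m, hm using Nat.le_induction with
  | base => simp [hP1]
  | succ n hn ih =>
    have hn1 : (1 : ℝ) ≤ (n : ℝ) := by exact_mod_cast hn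
    have hn0 : (0 : ℝ) < (n : ℝ) := by linarith
    have hn10 : (0 : ℝ) < (n : ℝ) + 1 := by linarith
    set A : ℝ := 1 - β / ((n : ℝ) + 1) with hA
    set B : ℝ := 1 - β / (n : ℝ) with hBdef
    have hB0 : 0 ≤ B := by
      rw [hBdef, sub_nonneg]
      rw [div_le_one hn0]
      linarith
    have hA0 : 0 ≤ A := by
      rw [hA, sub_nonneg]
      rw [div_le_one hn10]
      linarith
    have hAB : ((n : ℝ) + 1) * A = 1 + n * B := by
      rw [hA, hBdef]
      field_simp
      ring
    have hkey := key_jensen n hn A B hB0 hAB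
    have hrec := hPm (n + 1) (by omega)
    rw [Nat.add_sub_cancel] at hrec
    push_cast at hrec
    have hc : ((n : ℝ) + 1 - 1) * ((n : ℝ) + 1 - β) / ((n : ℝ) + 1) ^ 2
        = (n : ℝ) * A / ((n : ℝ) + 1) := by
      rw [hA, div_eq_div_iff (by positivity) (by positivity)]
      field_simp
      ring
    rw [hc] at hrec
    have hc0 : 0 ≤ (n : ℝ) * A / ((n : ℝ) + 1) := by positivity
    have step1 : P (n + 1) ≤ ((n : ℝ) * A / ((n : ℝ) + 1)) * (1 - B ^ n) + β / ((n : ℝ) + 1) := by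
      rw [hrec]
      have := mul_le_mul_of_nonneg_left ih hc0
      linarith
    have hA1 : ((n : ℝ) + 1) * A = (n : ℝ) + 1 - β := by
      rw [hA]; field_simp
    have hkeyA : ((n : ℝ) + 1) * A ^ (n + 1) ≤ A * (1 + n * B ^ n) := by
      have h1 := mul_le_mul_of_nonneg_left hkey hA0
      calc ((n : ℝ) + 1) * A ^ (n + 1) = A * (((n : ℝ) + 1) * A ^ n) := by rw [pow_succ]; ring
        _ ≤ A * (1 + n * B ^ n) := h1
    have step2 : ((n : ℝ) * A / ((n : ℝ) + 1)) * (1 - B ^ n) + β / ((n : ℝ) + 1)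
        ≤ 1 - A ^ (n + 1) := by
      rw [div_mul_eq_mul_div, ← add_div, div_le_iff₀ hn10]
      nlinarith [hkeyA, hA1]
    have goalcast : (1 - β / ((n : ℝ) + 1)) = A := by rw [hA]
    have : P (n + 1) ≤ 1 - A ^ (n + 1) := le_trans step1 step2
    push_cast
    rw [goalcast]
    exact this

/-- Full arithmetic content of the k-vehicle approximation guarantee. -/
theorem stmt_6 (k : ℕ) (hk : 1 ≤ k) (γ : ℝ) (hγ : 1 ≤ γ)
    (a p : ℕ → ℝ) (q : ℕ → ℕ → ℝ)
    (hmono : ∀ i ∈ Finset.Icc 1 k, ∀ j ∈ Finset.Icc 1 k, i ≤ j → a j ≤ a i)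
    (hann : ∀ i ∈ Finset.Icc 1 k, 0 ≤ a i)
    (hqnn : ∀ i ∈ Finset.Icc 1 k, ∀ j ∈ Finset.Icc 1 k, 0 ≤ q i j)
    (h1 : ∀ j ∈ Finset.Icc 1 k, p j ≥ ∑ i ∈ Finset.Icc 1 k, q i j)
    (h2 : ∀ j ∈ Finset.Icc 1 k, ∀ i ∈ Finset.Icc 1 k,
      p j ≥ 1 / (3 * γ) * (a i - ∑ j' ∈ Finset.Icc 1 (j - 1), q i j'))
    (P : ℕ → ℝ)
    (hP1 : P 1 = 1 / (3 * γ))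
    (hPm : ∀ m : ℕ, 2 ≤ m →
      P m = (3 * γ * (m : ℝ) ^ 2 - (3 * γ + 1) * m + 1) / (3 * γ * (m : ℝ) ^ 2)
              * P (m - 1) + 1 / (3 * γ * m)) :
    ∑ j ∈ Finset.Icc 1 k, p j ≥ P k * ∑ i ∈ Finset.Icc 1 k, a i := by
  have hγ0 : (0 : ℝ) < 3 * γ := by linarith
  set β : ℝ := 1 / (3 * γ) with hβdef
  have hβ0 : 0 < β := by positivity
  have hβ1 : β ≤ 1 / 3 := by
    rw [hβdef, div_le_div_iff₀ hγ0 (by norm_num)]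
    linarith
  have hk0 : (0 : ℝ) < (k : ℝ) := by exact_mod_cast hk
  have hk1 : (1 : ℝ) ≤ (k : ℝ) := by exact_mod_cast hk
  set S : ℝ := ∑ i ∈ Finset.Icc 1 k, a i with hSdef
  have hS : 0 ≤ S := Finset.sum_nonneg hann
  set x : ℝ := 1 - β / (k : ℝ) with hxdef
  have hβk : β / (k : ℝ) ≤ β := by
    apply div_le_self (le_of_lt hβ0) hk1
  have hx0 : 0 ≤ x := by
    rw [hxdef]
    have : β / (k : ℝ) ≤ 1 / 3 := le_trans hβk hβ1
    linarith
  have hkx : (k : ℝ) * (1 - x) = β := by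
    rw [hxdef]
    field_simp
    ring
  -- Part A: greedy progress bound
  have main : ∀ j : ℕ, j ≤ k →
      (1 - x ^ j) * S ≤ ∑ j' ∈ Finset.Icc 1 j, p j' := by
    intro j
    induction j with
    | zero => intro _; simp
    | succ n ihn =>
      intro hnk
      have hnk' : n ≤ k := by omega
      have ih := ihn hnk'
      -- split the sum
      have hins : (Finset.Icc 1 n).sum p + p (n + 1) = ∑ j' ∈ Finset.Icc 1 (n + 1), p j' := by
        rw [← Finset.insert_Icc_right_eq_Icc_add_one (by omega : 1 ≤ n + 1)]
        rw [Finset.sum_insert (by simp)]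
        ring
      set C : ℝ := ∑ i ∈ Finset.Icc 1 k, ∑ j' ∈ Finset.Icc 1 n, q i j' with hCdef
      have hCA : C ≤ ∑ j' ∈ Finset.Icc 1 n, p j' := by
        rw [hCdef, Finset.sum_comm]
        apply Finset.sum_le_sum
        intro j' hj'
        have hj'k : j' ∈ Finset.Icc 1 k := by
          simp only [Finset.mem_Icc] at hj' ⊢
          omega
        exact h1 j' hj'k
      have hp : β * (S - C) ≤ (k : ℝ) * p (n + 1) := by
        have hmem : n + 1 ∈ Finset.Icc 1 k := by
          simp only [Finset.mem_Icc]; omega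
        have hsum : ∑ i ∈ Finset.Icc 1 k, (β * (a i - ∑ j' ∈ Finset.Icc 1 n, q i j'))
            ≤ ∑ _i ∈ Finset.Icc 1 k, p (n + 1) := by
          apply Finset.sum_le_sum
          intro i hi
          have := h2 (n + 1) hmem i hi
          simpa [hβdef, Nat.add_sub_cancel] using this
        have hL : ∑ i ∈ Finset.Icc 1 k, (β * (a i - ∑ j' ∈ Finset.Icc 1 n, q i j'))
            = β * (S - C) := by
          rw [← Finset.mul_sum, Finset.sum_sub_distrib, hSdef, hCdef]
        have hR : ∑ _i ∈ Finset.Icc 1 k, p (n + 1) = (k : ℝ) * p (n + 1) := by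
          rw [Finset.sum_const, Nat.card_Icc]
          simp [nsmul_eq_mul]
        rw [hL, hR] at hsum
        exact hsum
      -- combine
      have h4 : β * (S - ∑ j' ∈ Finset.Icc 1 n, p j') ≤ (k : ℝ) * p (n + 1) := by
        have : β * (S - ∑ j' ∈ Finset.Icc 1 n, p j') ≤ β * (S - C) := by
          apply mul_le_mul_of_nonneg_left _ (le_of_lt hβ0)
          linarith
        linarith
      have h3 : (k : ℝ) * x * ((1 - x ^ n) * S) ≤ (k : ℝ) * x * (∑ j' ∈ Finset.Icc 1 n, p j') :=
        mul_le_mul_of_nonneg_left ih (by positivity)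
      have hkxe : (k : ℝ) * x = (k : ℝ) - β := by
        have hexp : (k : ℝ) * (1 - x) = (k : ℝ) - (k : ℝ) * x := by ring
        linarith [hkx, hexp]
      have h5 : (k : ℝ) * x * ((1 - x ^ n) * S) ≤ ((k : ℝ) - β) * (∑ j' ∈ Finset.Icc 1 n, p j') := by
        rw [← hkxe]; exact h3
      have h6 : (k : ℝ) * x * ((1 - x ^ n) * S) = ((k : ℝ) - β) * S - (k : ℝ) * x ^ (n + 1) * S := by
        rw [pow_succ, ← hkxe]; ring
      have hgoalmul : (k : ℝ) * ((1 - x ^ (n + 1)) * S) ≤ (k : ℝ) * ((∑ j' ∈ Finset.Icc 1 n, p j') + p (n + 1)) := by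
        nlinarith [h4, h5, h6]
      have := le_of_mul_le_mul_left (by linarith [hgoalmul] : (k : ℝ) * ((1 - x ^ (n + 1)) * S) ≤ (k : ℝ) * ((∑ j' ∈ Finset.Icc 1 n, p j') + p (n + 1))) hk0
      linarith [hins, this]
  -- Part B: bound P k
  have hPm' : ∀ m : ℕ, 2 ≤ m →
      P m = (((m : ℝ) - 1) * ((m : ℝ) - β) / (m : ℝ) ^ 2) * P (m - 1) + β / m := by
    intro m hm
    have hm0 : (0 : ℝ) < (m : ℝ) := by
      have : (2 : ℝ) ≤ (m : ℝ) := by exact_mod_cast hm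
      linarith
    rw [hPm m hm]
    have e1 : (3 * γ * (m : ℝ) ^ 2 - (3 * γ + 1) * m + 1) / (3 * γ * (m : ℝ) ^ 2)
        = ((m : ℝ) - 1) * ((m : ℝ) - β) / (m : ℝ) ^ 2 := by
      rw [hβdef]
      field_simp
      ring
    have e2 : 1 / (3 * γ * (m : ℝ)) = β / m := by
      rw [hβdef]
      field_simp
    rw [e1, e2]
  have hPk : P k ≤ 1 - (1 - β / (k : ℝ)) ^ k :=
    Pbound β (le_of_lt hβ0) (by linarith) P (by rw [hP1, hβdef]) hPm' k hk
  have hfinal := main k (le_refl k)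
  have : P k * S ≤ (1 - x ^ k) * S := by
    apply mul_le_mul_of_nonneg_right _ hS
    rw [hxdef]
    exact hPk
  calc P k * S ≤ (1 - x ^ k) * S := this
    _ ≤ ∑ j ∈ Finset.Icc 1 k, p j := hfinal
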